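/- Let f : ℝ² → ℝ be a polynomial function with f(0,0) = 0 that has a strict local minimum at the origin, i.e. f(p) > 0 for all p ≠ (0,0) in some neighborhood of the origin. Let I ⊆ ℝ be an open interval containing 0 and γ : ℝ → ℝ² a map that is real-analytic at every point of I, with γ(0) = (0,0), γ(t) ≠ (0,0) for all t ∈ I \ {0}, and ∂f/∂y (γ(t)) = 0 for all t ∈ I. Then there exists δ > 0 with [0, δ] ⊆ I such that f ∘ γ is strictly increasing on [0, δ]. -/
import Mathlib

/-- Let `f : ℝ² → ℝ` be a polynomial function with `f(0,0) = 0` and a strict local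
minimum at the origin. If `γ` is an analytic parametrisation on an open interval `I ∋ 0` of a
half-branch through the origin of the polar curve `{∂f/∂y = 0}` (i.e. `γ(0) = (0,0)`,
`γ(t) ≠ (0,0)` for `t ∈ I \ {0}`, and `∂f/∂y (γ t) = 0` on `I`), then `f ∘ γ` is strictly
increasing on some interval `[0, δ] ⊆ I` with `δ > 0`. -/
theorem f_strictly_increasing_on_polar_half_branch (f : ℝ × ℝ → ℝ)
    (hpoly : ∃ F : MvPolynomial (Fin 2) ℝ,
      ∀ q : ℝ × ℝ, f q = MvPolynomial.eval ![q.1, q.2] F)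
    (hf0 : f (0, 0) = 0)
    (hmin : ∀ᶠ q in nhds ((0, 0) : ℝ × ℝ), q ≠ (0, 0) → 0 < f q)
    (I : Set ℝ) (a b : ℝ) (ha : a < 0) (hb : 0 < b) (hI : I = Set.Ioo a b)
    (γ : ℝ → ℝ × ℝ) (hγ : ∀ t ∈ I, AnalyticAt ℝ γ t)
    (hγ0 : γ 0 = (0, 0))
    (hγne : ∀ t ∈ I \ {(0 : ℝ)}, γ t ≠ (0, 0))
    (hpolar : ∀ t ∈ I, deriv (fun y' : ℝ => f ((γ t).1, y')) (γ t).2 = 0) :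
    ∃ δ > 0, Set.Icc 0 δ ⊆ I ∧ StrictMonoOn (f ∘ γ) (Set.Icc 0 δ) := by
  subst hI
  obtain ⟨F, hF⟩ := hpoly
  have h0I : (0:ℝ) ∈ Set.Ioo a b := ⟨ha, hb⟩
  set g : ℝ → ℝ := f ∘ γ with hg_def
  -- f is analytic everywhere
  have hfA : ∀ q : ℝ × ℝ, AnalyticAt ℝ f q := by
    intro q
    have h1 : AnalyticAt ℝ (fun q : ℝ × ℝ => MvPolynomial.eval ![q.1, q.2] F) q := by
      apply AnalyticAt.aeval_mvPolynomial
      intro i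
      fin_cases i
      · simpa using (ContinuousLinearMap.fst ℝ ℝ ℝ).analyticAt q
      · simpa using (ContinuousLinearMap.snd ℝ ℝ ℝ).analyticAt q
    have : f = fun q : ℝ × ℝ => MvPolynomial.eval ![q.1, q.2] F := funext hF
    rw [this]
    exact h1
  have hgA : ∀ t ∈ Set.Ioo a b, AnalyticAt ℝ g t := fun t ht =>
    (hfA (γ t)).comp (hγ t ht)
  have hg'A : ∀ t ∈ Set.Ioo a b, AnalyticAt ℝ (deriv g) t := by
    have h : AnalyticOnNhd ℝ g (Set.Ioo a b) := hgA
    exact h.deriv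
  have hg0 : g 0 = 0 := by
    show f (γ 0) = 0
    rw [hγ0, hf0]
  -- g positive on punctured neighborhood
  have htend : Filter.Tendsto γ (nhds 0) (nhds ((0,0) : ℝ × ℝ)) := by
    have := (hγ 0 h0I).continuousAt
    rwa [ContinuousAt, hγ0] at this
  have hev1 : ∀ᶠ t in nhds (0:ℝ), γ t ≠ (0,0) → 0 < f (γ t) := htend.eventually hmin
  have hevI : ∀ᶠ t in nhds (0:ℝ), t ∈ Set.Ioo a b :=
    Filter.eventually_of_mem (isOpen_Ioo.mem_nhds h0I) (fun x hx => hx)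
  have hgpos : ∀ᶠ t in nhdsWithin 0 {(0:ℝ)}ᶜ, 0 < g t := by
    filter_upwards [(hev1.and hevI).filter_mono nhdsWithin_le_nhds,
      self_mem_nhdsWithin] with t ht hne
    exact ht.1 (hγne t ⟨ht.2, hne⟩)
  -- mean value theorem helper
  have hsub : ∀ c : ℝ, 0 < c → c ∈ Set.Ioo a b → Set.Icc 0 c ⊆ Set.Ioo a b := by
    intro c hc hcI t ht
    exact ⟨lt_of_lt_of_le ha ht.1, lt_of_le_of_lt ht.2 hcI.2⟩
  have hMVT : ∀ c : ℝ, 0 < c → c ∈ Set.Ioo a b →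
      ∃ ξ ∈ Set.Ioo 0 c, deriv g ξ = g c / c := by
    intro c hc hcI
    have hss := hsub c hc hcI
    have hcont : ContinuousOn g (Set.Icc 0 c) := fun x hx =>
      ((hgA x (hss hx)).continuousAt).continuousWithinAt
    have hdiff : DifferentiableOn ℝ g (Set.Ioo 0 c) := fun x hx =>
      ((hgA x (hss (Set.Ioo_subset_Icc_self hx))).differentiableAt).differentiableWithinAt
    obtain ⟨ξ, hξ, hξeq⟩ := exists_deriv_eq_slope g hc hcont hdiff
    refine ⟨ξ, hξ, ?_⟩
    rw [hξeq, hg0, sub_zero, sub_zero]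
  rcases (hg'A 0 h0I).eventually_eq_zero_or_eventually_ne_zero with hcase | hcase
  · -- deriv g ≡ 0 near 0 : impossible
    exfalso
    have hall : ∀ᶠ t in nhdsWithin 0 {(0:ℝ)}ᶜ,
        0 < g t ∧ deriv g t = 0 ∧ t ∈ Set.Ioo a b :=
      hgpos.and ((hcase.and hevI).filter_mono nhdsWithin_le_nhds)
    rw [Filter.eventually_iff, Metric.mem_nhdsWithin_iff] at hall
    obtain ⟨ε, hε, hεprop⟩ := hall
    have hprop : ∀ t : ℝ, 0 < t → t < ε →
        0 < g t ∧ deriv g t = 0 ∧ t ∈ Set.Ioo a b := by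
      intro t ht htε
      refine hεprop ⟨?_, ?_⟩
      · rw [Metric.mem_ball, Real.dist_eq, sub_zero, abs_lt]
        constructor <;> linarith
      · exact ne_of_gt ht
    have hc2 : (0:ℝ) < ε/2 := by linarith
    have hc2ε : ε/2 < ε := by linarith
    obtain ⟨hgc, _, hcI⟩ := hprop (ε/2) hc2 hc2ε
    obtain ⟨ξ, hξ, hξeq⟩ := hMVT (ε/2) hc2 hcI
    have hξpos : 0 < deriv g ξ := by
      rw [hξeq]; positivity
    have := (hprop ξ hξ.1 (lt_trans hξ.2 hc2ε)).2.1
    rw [this] at hξpos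
    exact lt_irrefl 0 hξpos
  · -- deriv g ≠ 0 near 0
    have hall : ∀ᶠ t in nhdsWithin 0 {(0:ℝ)}ᶜ,
        0 < g t ∧ deriv g t ≠ 0 ∧ t ∈ Set.Ioo a b :=
      hgpos.and (hcase.and (hevI.filter_mono nhdsWithin_le_nhds))
    rw [Filter.eventually_iff, Metric.mem_nhdsWithin_iff] at hall
    obtain ⟨ε, hε, hεprop⟩ := hall
    have hprop : ∀ t : ℝ, 0 < t → t < ε →
        0 < g t ∧ deriv g t ≠ 0 ∧ t ∈ Set.Ioo a b := by
      intro t ht htε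
      refine hεprop ⟨?_, ?_⟩
      · rw [Metric.mem_ball, Real.dist_eq, sub_zero, abs_lt]
        constructor <;> linarith
      · exact ne_of_gt ht
    -- deriv g > 0 on (0, ε)
    have hpos' : ∀ c : ℝ, 0 < c → c < ε → 0 < deriv g c := by
      intro c hc hcε
      obtain ⟨hgc, hne, hcI⟩ := hprop c hc hcε
      by_contra hle
      push_neg at hle
      have hlt : deriv g c < 0 := lt_of_le_of_ne hle hne
      obtain ⟨ξ, hξ, hξeq⟩ := hMVT c hc hcI
      have hξpos : 0 < deriv g ξ := by rw [hξeq]; positivity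
      have hcont' : ContinuousOn (deriv g) (Set.Icc ξ c) := by
        intro x hx
        have hxI : x ∈ Set.Ioo a b :=
          hsub c hc hcI ⟨le_trans hξ.1.le hx.1, hx.2⟩
        exact ((hg'A x hxI).continuousAt).continuousWithinAt
      have hIVT := intermediate_value_Icc' hξ.2.le hcont'
      have h0mem : (0:ℝ) ∈ Set.Icc (deriv g c) (deriv g ξ) := ⟨hlt.le, hξpos.le⟩
      obtain ⟨x, hx, hx0⟩ := hIVT h0mem
      have hx1 : 0 < x := lt_of_lt_of_le hξ.1 hx.1
      have hx2 : x < ε := lt_of_le_of_lt hx.2 hcε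
      exact (hprop x hx1 hx2).2.1 hx0
    -- conclude
    refine ⟨min (ε/2) (b/2), by positivity, ?_, ?_⟩
    · intro t ht
      refine ⟨lt_of_lt_of_le ha ht.1, ?_⟩
      have : t ≤ b/2 := le_trans ht.2 (min_le_right _ _)
      linarith
    · have hδI : Set.Icc 0 (min (ε/2) (b/2)) ⊆ Set.Ioo a b := by
        intro t ht
        refine ⟨lt_of_lt_of_le ha ht.1, ?_⟩
        have : t ≤ b/2 := le_trans ht.2 (min_le_right _ _)
        linarith
      apply strictMonoOn_of_deriv_pos (convex_Icc 0 (min (ε/2) (b/2)))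
      · exact fun x hx => ((hgA x (hδI hx)).continuousAt).continuousWithinAt
      · intro x hx
        rw [interior_Icc] at hx
        refine hpos' x hx.1 ?_
        have : x < ε/2 := lt_of_lt_of_le hx.2 (min_le_left _ _)
        linarith
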